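/- Let k be a field, let m, d be positive integers, and let f₀, f₁, f₂, f₃ ∈ k[t] be polynomials each of degree at most m. If the binomial coefficient C(d+3, 3) is strictly greater than d·m + 1, then there exists a nonzero polynomial F in four variables over k, homogeneous of degree d, such that F(f₀, f₁, f₂, f₃) = 0 in k[t]. -/

import Mathlib

open MvPolynomial Polynomial

theorem exists_homogeneous_form_vanishing (k : Type*) [Field k] (m d : ℕ)
    (hm : 0 < m) (hd : 0 < d) (f : Fin 4 → Polynomial k)
    (hdeg : ∀ i, (f i).natDegree ≤ m)
    (hcount : d * m + 1 < (d + 3).choose 3) :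
    ∃ F : MvPolynomial (Fin 4) k, F ≠ 0 ∧ F.IsHomogeneous d ∧
      MvPolynomial.aeval f F = 0 := by
  classical
  set n := d * m + 1 with hn
  -- the linear map from coefficient vectors to multivariate polynomials
  let Φ : (Sym (Fin 4) d → k) →ₗ[k] MvPolynomial (Fin 4) k :=
    ∑ s : Sym (Fin 4) d,
      (MvPolynomial.monomial (Multiset.toFinsupp (s : Multiset (Fin 4)))).comp
        (LinearMap.proj s)
  have hΦ : ∀ c, Φ c = ∑ s : Sym (Fin 4) d,
      MvPolynomial.monomial (Multiset.toFinsupp (s : Multiset (Fin 4))) (c s) := by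
    intro c
    simp [Φ, LinearMap.sum_apply]
  -- each monomial appearing is homogeneous of degree d
  have hdegmon : ∀ s : Sym (Fin 4) d,
      (Multiset.toFinsupp (s : Multiset (Fin 4))).degree = d := by
    intro s
    have h := Multiset.toFinsupp_sum_eq (s : Multiset (Fin 4))
    simp only [Finsupp.sum, id] at h
    rw [Finsupp.degree]
    exact h.trans s.prop
  have hhom : ∀ c, (Φ c).IsHomogeneous d := by
    intro c
    rw [hΦ]
    apply IsHomogeneous.sum
    intro s _
    exact isHomogeneous_monomial _ (hdegmon s)
  -- evaluation lands in polynomials of degree < n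
  have hdegbound : ∀ c, (MvPolynomial.aeval f (Φ c)) ∈ Polynomial.degreeLT k n := by
    intro c
    rw [Polynomial.mem_degreeLT, hΦ, map_sum]
    refine lt_of_le_of_lt (Polynomial.degree_sum_le _ _) ?_
    rw [Finset.sup_lt_iff (by exact_mod_cast WithBot.bot_lt_coe n)]
    intro s _
    have hnd : (MvPolynomial.aeval f
        (MvPolynomial.monomial (Multiset.toFinsupp (s : Multiset (Fin 4))) (c s))).natDegree
        ≤ d * m := by
      set σ := Multiset.toFinsupp (s : Multiset (Fin 4)) with hσ
      rw [MvPolynomial.aeval_monomial]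
      refine le_trans (Polynomial.natDegree_mul_le) ?_
      have h1 : (algebraMap k (Polynomial k) (c s)).natDegree = 0 := by
        simp [Polynomial.natDegree_C]
      rw [h1, zero_add]
      refine le_trans (Polynomial.natDegree_prod_le _ _) ?_
      calc ∑ i ∈ σ.support, ((f i) ^ (σ i)).natDegree
          ≤ ∑ i ∈ σ.support, σ i * m := by
            refine Finset.sum_le_sum fun i _ => ?_
            exact le_trans (Polynomial.natDegree_pow_le)
              (Nat.mul_le_mul_left _ (hdeg i))
        _ = (∑ i ∈ σ.support, σ i) * m := by rw [Finset.sum_mul]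
        _ = d * m := by
            congr 1
            have := hdegmon s
            rwa [Finsupp.degree] at this
    calc (MvPolynomial.aeval f
        (MvPolynomial.monomial (Multiset.toFinsupp (s : Multiset (Fin 4))) (c s))).degree
        ≤ ((MvPolynomial.aeval f
          (MvPolynomial.monomial (Multiset.toFinsupp (s : Multiset (Fin 4))) (c s))).natDegree
            : WithBot ℕ) := Polynomial.degree_le_natDegree
      _ ≤ (d * m : ℕ) := by exact_mod_cast hnd
      _ < (n : WithBot ℕ) := by exact_mod_cast Nat.lt_succ_self _
  -- the composed linear map into degreeLT
  let T : (Sym (Fin 4) d → k) →ₗ[k] Polynomial.degreeLT k n :=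
    LinearMap.codRestrict _ ((MvPolynomial.aeval f).toLinearMap.comp Φ) hdegbound
  -- dimension count: T is not injective
  haveI : Module.Finite k (Polynomial.degreeLT k n) :=
    Module.Finite.equiv (Polynomial.degreeLTEquiv k n).symm
  have hrank1 : Module.finrank k (Sym (Fin 4) d → k) = (d + 3).choose 3 := by
    rw [Module.finrank_fintype_fun_eq_card, Sym.card_sym_eq_choose]
    simp only [Fintype.card_fin]
    have h1 : 4 + d - 1 = d + 3 := by omega
    rw [h1, ← Nat.choose_symm (by omega : d ≤ d + 3)]
    congr 1
    omega
  have hrank2 : Module.finrank k (Polynomial.degreeLT k n) = n := by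
    rw [LinearEquiv.finrank_eq (Polynomial.degreeLTEquiv k n),
      Module.finrank_fintype_fun_eq_card, Fintype.card_fin]
  have hninj : ¬ Function.Injective T := by
    intro hinj
    have := LinearMap.finrank_le_finrank_of_injective hinj
    rw [hrank1, hrank2] at this
    omega
  have hker : LinearMap.ker T ≠ ⊥ := fun h => hninj (LinearMap.ker_eq_bot.mp h)
  obtain ⟨c, hcker, hc0⟩ := (Submodule.ne_bot_iff _).mp hker
  have hTc : T c = 0 := LinearMap.mem_ker.mp hcker
  refine ⟨Φ c, ?_, hhom c, ?_⟩
  · -- Φ c ≠ 0 since some coefficient of c is nonzero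
    intro h0
    apply hc0
    funext s
    have : MvPolynomial.coeff (Multiset.toFinsupp (s : Multiset (Fin 4))) (Φ c) = c s := by
      rw [hΦ, MvPolynomial.coeff_sum]
      rw [Finset.sum_eq_single s]
      · rw [MvPolynomial.coeff_monomial, if_pos rfl]
      · intro t _ hts
        rw [MvPolynomial.coeff_monomial, if_neg]
        intro he
        exact hts (Sym.coe_injective (Multiset.toFinsupp.injective he))
      · simp
    rw [h0] at this
    simpa using this.symm
  · have h2 := congrArg Subtype.val hTc
    exact h2
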